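/- Let N ≥ 1 and let f : ℝ^N → ℝ be continuously differentiable with f ≥ 1 everywhere, and suppose that for some 0 < γ < 1 and some M > 0 one has |∇f(x)| ≤ M·f(x)^γ for all x ∈ ℝ^N. Then there exists a constant C > 0 such that f(X) ≤ C·(1 + |X − Y|²)^{1/(2(1−γ))}·f(Y) for all X, Y ∈ ℝ^N. -/

import Mathlib

/-- If `f : ℝ^N → ℝ` is `C¹`, `f ≥ 1`, and `‖∇f‖ ≤ M f^γ` for some
`0 < γ < 1`, `M > 0`, then `f(X) ≤ C (1 + |X-Y|²)^(1/(2(1-γ))) f(Y)` for some `C > 0`. -/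
theorem gradient_bound_implies_order_function
    (N : ℕ) (hN : 1 ≤ N) (f : EuclideanSpace ℝ (Fin N) → ℝ)
    (hf : ContDiff ℝ 1 f) (hf1 : ∀ x, 1 ≤ f x)
    (γ M : ℝ) (hγ0 : 0 < γ) (hγ1 : γ < 1) (hM : 0 < M)
    (hgrad : ∀ x, ‖gradient f x‖ ≤ M * f x ^ γ) :
    ∃ C > 0, ∀ X Y : EuclideanSpace ℝ (Fin N),
      f X ≤ C * (1 + ‖X - Y‖ ^ 2) ^ (1 / (2 * (1 - γ))) * f Y := by
  have hγ' : 0 < 1 - γ := by linarith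
  set c := (1 - γ) * M with hc
  have hc0 : 0 ≤ c := by positivity
  have hfpos : ∀ x, 0 < f x := fun x => lt_of_lt_of_le one_pos (hf1 x)
  have hfd : ∀ x, HasFDerivAt f (fderiv ℝ f x) x :=
    fun x => (hf.differentiable one_ne_zero x).hasFDerivAt
  have hgd : ∀ x : EuclideanSpace ℝ (Fin N),
      HasFDerivAt (fun y => f y ^ (1 - γ))
        (((1 - γ) * f x ^ (1 - γ - 1)) • fderiv ℝ f x) x := by
    intro x
    exact (Real.hasDerivAt_rpow_const (Or.inl (hfpos x).ne')).comp_hasFDerivAt x (hfd x)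
  have hbound : ∀ x, ‖((1 - γ) * f x ^ (1 - γ - 1)) • fderiv ℝ f x‖ ≤ c := by
    intro x
    rw [norm_smul]
    have h1 : ‖fderiv ℝ f x‖ = ‖gradient f x‖ := by
      rw [gradient]
      exact ((InnerProductSpace.toDual ℝ _).symm.norm_map _).symm
    have h2 : ‖fderiv ℝ f x‖ ≤ M * f x ^ γ := by rw [h1]; exact hgrad x
    have h3 : ‖(1 - γ) * f x ^ (1 - γ - 1)‖ = (1 - γ) * f x ^ (1 - γ - 1) := by
      rw [Real.norm_eq_abs, abs_of_nonneg]
      have := Real.rpow_nonneg (hfpos x).le (1 - γ - 1)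
      positivity
    rw [h3]
    calc (1 - γ) * f x ^ (1 - γ - 1) * ‖fderiv ℝ f x‖
        ≤ (1 - γ) * f x ^ (1 - γ - 1) * (M * f x ^ γ) := by
          apply mul_le_mul_of_nonneg_left h2
          have := Real.rpow_nonneg (hfpos x).le (1 - γ - 1)
          positivity
      _ = c := by
          rw [hc, show (1 - γ) * f x ^ (1 - γ - 1) * (M * f x ^ γ)
              = (1 - γ) * M * (f x ^ (1 - γ - 1) * f x ^ γ) by ring,
            ← Real.rpow_add (hfpos x)]
          norm_num
  have key : ∀ X Y : EuclideanSpace ℝ (Fin N),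
      f X ^ (1 - γ) ≤ f Y ^ (1 - γ) + c * ‖X - Y‖ := by
    intro X Y
    have h := Convex.norm_image_sub_le_of_norm_hasFDerivWithin_le
      (f := fun y => f y ^ (1 - γ))
      (f' := fun x => ((1 - γ) * f x ^ (1 - γ - 1)) • fderiv ℝ f x)
      (fun x _ => (hgd x).hasFDerivWithinAt) (fun x _ => hbound x)
      convex_univ (Set.mem_univ Y) (Set.mem_univ X)
    rw [Real.norm_eq_abs] at h
    have h2 := le_trans (le_abs_self _) h
    linarith
  refine ⟨(1 + c) ^ (1 / (1 - γ)), by positivity, ?_⟩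
  intro X Y
  set t := ‖X - Y‖ with ht
  have ht0 : 0 ≤ t := norm_nonneg _
  have hsq : t ≤ (1 + t ^ 2) ^ ((1 : ℝ) / 2) := by
    rw [← Real.sqrt_eq_rpow]
    calc t = Real.sqrt (t ^ 2) := (Real.sqrt_sq ht0).symm
      _ ≤ Real.sqrt (1 + t ^ 2) := Real.sqrt_le_sqrt (by linarith)
  have h1s : 1 ≤ (1 + t ^ 2) ^ ((1 : ℝ) / 2) := by
    rw [← Real.sqrt_eq_rpow]
    exact Real.one_le_sqrt.mpr (by nlinarith)
  have hst : 1 + c * t ≤ (1 + c) * (1 + t ^ 2) ^ ((1 : ℝ) / 2) := by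
    have := mul_le_mul_of_nonneg_left hsq hc0
    nlinarith
  have hstep1 : f X ^ (1 - γ) ≤ f Y ^ (1 - γ) * (1 + c * t) := by
    have h1 : 1 ≤ f Y ^ (1 - γ) := Real.one_le_rpow (hf1 Y) hγ'.le
    have h2 := key X Y
    nlinarith [mul_nonneg hc0 ht0]
  have e1 : ∀ Z, (f Z ^ (1 - γ)) ^ (1 / (1 - γ)) = f Z := by
    intro Z
    rw [← Real.rpow_mul (hfpos Z).le, mul_one_div, div_self hγ'.ne', Real.rpow_one]
  have mono := Real.rpow_le_rpow (Real.rpow_nonneg (hfpos X).le _) hstep1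
    (by positivity : (0 : ℝ) ≤ 1 / (1 - γ))
  rw [Real.mul_rpow (Real.rpow_nonneg (hfpos Y).le _) (by positivity), e1 X, e1 Y] at mono
  have h3 : (1 + c * t) ^ (1 / (1 - γ))
      ≤ (1 + c) ^ (1 / (1 - γ)) * (1 + t ^ 2) ^ (1 / (2 * (1 - γ))) := by
    calc (1 + c * t) ^ (1 / (1 - γ))
        ≤ ((1 + c) * (1 + t ^ 2) ^ ((1 : ℝ) / 2)) ^ (1 / (1 - γ)) :=
          Real.rpow_le_rpow (by positivity) hst (by positivity)
      _ = (1 + c) ^ (1 / (1 - γ)) * ((1 + t ^ 2) ^ ((1 : ℝ) / 2)) ^ (1 / (1 - γ)) :=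
          Real.mul_rpow (by positivity) (by positivity)
      _ = (1 + c) ^ (1 / (1 - γ)) * (1 + t ^ 2) ^ (1 / (2 * (1 - γ))) := by
          rw [← Real.rpow_mul (by positivity)]
          congr 1
          field_simp
  calc f X ≤ f Y * (1 + c * t) ^ (1 / (1 - γ)) := mono
    _ ≤ f Y * ((1 + c) ^ (1 / (1 - γ)) * (1 + t ^ 2) ^ (1 / (2 * (1 - γ)))) :=
        mul_le_mul_of_nonneg_left h3 (hfpos Y).le
    _ = (1 + c) ^ (1 / (1 - γ)) * (1 + t ^ 2) ^ (1 / (2 * (1 - γ))) * f Y := by ring
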